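/- Let n ≥ 3, let a be an integer with 1 ≤ a ≤ n, let ω_a = e^{2πia/n} with ω_a ≠ −1, and let Δ be a real number. Define P_a(z) = (ω_a+1)z^n − 2ω_aΔ·z^{n−1} − 2Δ·z + (ω_a+1). If |Δ| > (n/(n−2))·|ω_a + 1|/2, then P_a has exactly n−2 roots on the complex unit circle U, all of which are simple, and the remaining two roots are of the form s and ω_a/s for some complex number s with |s| ≠ 1. -/

import Mathlib

open Polynomial Complex

section BetheAux
open Polynomial Filter Set

lemma ivt_zero {f : ℝ → ℝ} (hf : Continuous f) {x y : ℝ} (hxy : x < y)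
    (h : f x * f y < 0) : ∃ t ∈ Set.Ioo x y, f t = 0 := by
  rcases mul_neg_iff.1 h with ⟨hx, hy⟩ | ⟨hx, hy⟩
  · obtain ⟨t, ht, ht0⟩ := intermediate_value_Ioo' hxy.le hf.continuousOn
      (show (0:ℝ) ∈ Set.Ioo (f y) (f x) from ⟨hy, hx⟩)
    exact ⟨t, ht, ht0⟩
  · obtain ⟨t, ht, ht0⟩ := intermediate_value_Ioo hxy.le hf.continuousOn
      (show (0:ℝ) ∈ Set.Ioo (f x) (f y) from ⟨hx, hy⟩)
    exact ⟨t, ht, ht0⟩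

lemma poly_L1 (F : Polynomial ℝ) (h1 : F.eval 1 < 0)
    (hT : Tendsto (fun x => F.eval x) atTop atTop) : ∃ w : ℝ, 1 < w ∧ F.eval w = 0 := by
  obtain ⟨M, hM1, hM0⟩ : ∃ M, 1 < M ∧ 0 < F.eval M := by
    have := (hT.eventually (eventually_gt_atTop 0)).and (eventually_gt_atTop 1)
    obtain ⟨M, h1', h2'⟩ := this.exists
    exact ⟨M, h2', h1'⟩
  obtain ⟨t, ht, ht0⟩ := ivt_zero (F.continuous_aeval) hM1 (mul_neg_of_neg_of_pos h1 hM0)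
  exact ⟨t, ht.1, ht0⟩

lemma poly_L2 (F : Polynomial ℝ) (h0 : F.eval 1 = 0) (hd : 0 < F.derivative.eval 1)
    (hT : Tendsto (fun x => F.eval x) atTop atBot) : ∃ w : ℝ, 1 < w ∧ F.eval w = 0 := by
  -- find x > 1 with F.eval x > 0
  have hder : HasDerivAt (fun x => F.eval x) (F.derivative.eval 1) 1 := F.hasDerivAt 1
  have hslope := hasDerivAt_iff_tendsto_slope.1 hder
  have hev : ∀ᶠ y in nhdsWithin 1 {(1:ℝ)}ᶜ, 0 < slope (fun x => F.eval x) 1 y :=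
    hslope.eventually (eventually_gt_nhds hd)
  have hle : nhdsWithin (1:ℝ) (Set.Ioi 1) ≤ nhdsWithin 1 {(1:ℝ)}ᶜ :=
    nhdsWithin_mono 1 (fun y hy => ne_of_gt hy)
  have hev2 : ∀ᶠ y in nhdsWithin (1:ℝ) (Set.Ioi 1), 0 < slope (fun x => F.eval x) 1 y ∧ 1 < y :=
    Filter.Eventually.and (hle hev) self_mem_nhdsWithin
  obtain ⟨y, hy0, hy1⟩ := hev2.exists
  have hFy : 0 < F.eval y := by
    have : slope (fun x => F.eval x) 1 y = (F.eval y) / (y - 1) := by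
      simp [slope, h0, vsub_eq_sub, div_eq_inv_mul]
    rw [this] at hy0
    have := mul_pos hy0 (sub_pos.2 hy1)
    rwa [div_mul_cancel₀] at this
    exact ne_of_gt (sub_pos.2 hy1)
  obtain ⟨M, hM1, hM0⟩ : ∃ M, y < M ∧ F.eval M < 0 := by
    have := (hT.eventually (eventually_lt_atBot 0)).and (eventually_gt_atTop y)
    obtain ⟨M, h1', h2'⟩ := this.exists
    exact ⟨M, h2', h1'⟩
  obtain ⟨t, ht, ht0⟩ := ivt_zero (F.continuous_aeval) hM1 (mul_neg_of_pos_of_neg hFy hM0)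
  exact ⟨t, hy1.trans ht.1, ht0⟩

lemma quartic_eval (A B D E w : ℝ) (k : ℕ) :
    (C A * X^(k+3) + C B * X^(k+2) + C D * X + C E).eval w
      = A*w^(k+3) + B*w^(k+2) + D*w + E := by simp

lemma quartic_natDegree (A B D E : ℝ) (k : ℕ) (hA : A ≠ 0) :
    (C A * X^(k+3) + C B * X^(k+2) + C D * X + C E).natDegree = k+3 := by
  compute_degree
  · simp only [if_neg (by omega : ¬ k + 3 = 1)]; simpa using hA
  all_goals omega

lemma quartic_leadingCoeff (A B D E : ℝ) (k : ℕ) (hA : A ≠ 0) :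
    (C A * X^(k+3) + C B * X^(k+2) + C D * X + C E).leadingCoeff = A := by
  rw [leadingCoeff, quartic_natDegree A B D E k hA]
  simp [coeff_X, coeff_one]

lemma quartic_deriv (A B D E : ℝ) (k : ℕ) :
    ((C A * X^(k+3) + C B * X^(k+2) + C D * X + C E).derivative).eval 1
      = (k+3)*A + (k+2)*B + D := by
  simp only [derivative_add, derivative_mul, derivative_C, derivative_X_pow, derivative_X,
    zero_mul, zero_add, mul_one, eval_add, eval_mul, eval_pow, eval_C, eval_X, one_pow,
    eval_natCast, mul_zero, eval_zero]
  push_cast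
  ring

lemma root_gt_one_L1 (k : ℕ) (A B D E : ℝ) (hA : 0 < A) (h1 : A + B + D + E < 0) :
    ∃ w : ℝ, 1 < w ∧ A*w^(k+3) + B*w^(k+2) + D*w + E = 0 := by
  set F : Polynomial ℝ := C A * X^(k+3) + C B * X^(k+2) + C D * X + C E with hF
  have hdeg : F.natDegree = k + 3 := quartic_natDegree A B D E k (ne_of_gt hA)
  obtain ⟨w, hw1, hw0⟩ := poly_L1 F (by rw [quartic_eval]; simpa using h1)
    (F.tendsto_atTop_of_leadingCoeff_nonneg
      (by rw [degree_eq_natDegree (fun h => by simp [h] at hdeg), hdeg]; exact_mod_cast Nat.succ_pos _)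
      (by rw [quartic_leadingCoeff A B D E k (ne_of_gt hA)]; exact hA.le))
  exact ⟨w, hw1, by rwa [quartic_eval] at hw0⟩

lemma root_gt_one_L2 (k : ℕ) (A B D E : ℝ) (hA : A < 0) (h0 : A + B + D + E = 0)
    (hd : 0 < (k+3)*A + (k+2)*B + D) :
    ∃ w : ℝ, 1 < w ∧ A*w^(k+3) + B*w^(k+2) + D*w + E = 0 := by
  set F : Polynomial ℝ := C A * X^(k+3) + C B * X^(k+2) + C D * X + C E with hF
  have hdeg : F.natDegree = k + 3 := quartic_natDegree A B D E k (ne_of_lt hA)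
  obtain ⟨w, hw1, hw0⟩ := poly_L2 F (by rw [quartic_eval]; simpa using h0)
    (by rw [quartic_deriv]; exact hd)
    (F.tendsto_atBot_of_leadingCoeff_nonpos
      (by rw [degree_eq_natDegree (fun h => by simp [h] at hdeg), hdeg]; exact_mod_cast Nat.succ_pos _)
      (by rw [quartic_leadingCoeff A B D E k (ne_of_lt hA)]; exact hA.le))
  exact ⟨w, hw1, by rwa [quartic_eval] at hw0⟩

lemma off_root_pos (k : ℕ) (σ c d : ℝ) (hσ : σ = 1 ∨ σ = -1) (hc : 0 < c)
    (hd : (k+3)*c < (k+1)*|d|) :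
    ∃ w : ℝ, 1 < |w| ∧ σ*c*w^(k+3) - σ*d*w^(k+2) - d*w + c = 0 := by
  have hkc : ((k:ℝ)+1) * c < ((k:ℝ)+1) * |d| := by
    refine lt_of_le_of_lt ?_ hd
    have : ((k:ℝ)+1) ≤ ((k:ℝ)+3) := by linarith
    nlinarith
  have hcd : c < |d| := by
    have hk1 : (0:ℝ) < (k:ℝ)+1 := by positivity
    exact lt_of_mul_lt_mul_left hkc hk1.le
  have hd0 : d ≠ 0 := by
    intro h; rw [h] at hcd; simp at hcd; linarith
  have hek2 : Even k → Even (k+2) := fun ⟨j, hj⟩ => ⟨j+1, by omega⟩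
  have hok3 : Even k → Odd (k+3) := fun ⟨j, hj⟩ => ⟨j+1, by omega⟩
  have hok2 : Odd k → Odd (k+2) := fun ⟨j, hj⟩ => ⟨j+1, by omega⟩
  have hek3 : Odd k → Even (k+3) := fun ⟨j, hj⟩ => ⟨j+2, by omega⟩
  rcases hσ with rfl | rfl
  · rcases hd0.lt_or_gt with hdneg | hdpos
    · have habs : |d| = -d := abs_of_neg hdneg
      rcases Nat.even_or_odd k with hk | hk
      · -- n odd : L2 with A=-c,B=-d,D=d,E=c, root at -w
        obtain ⟨w, hw1, hw0⟩ := root_gt_one_L2 k (-c) (-d) d c (by linarith)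
          (by ring) (by rw [habs] at hd; ring_nf; ring_nf at hd; linarith)
        refine ⟨-w, by rw [abs_neg, abs_of_pos (by linarith)]; exact hw1, ?_⟩
        rw [(hok3 hk).neg_pow, (hek2 hk).neg_pow]
        linarith [hw0]
      · -- n even : L1 with A=c,B=d,D=d,E=c, root at -w
        obtain ⟨w, hw1, hw0⟩ := root_gt_one_L1 k c d d c hc (by linarith)
        refine ⟨-w, by rw [abs_neg, abs_of_pos (by linarith)]; exact hw1, ?_⟩
        rw [(hek3 hk).neg_pow, (hok2 hk).neg_pow]
        linarith [hw0]
    · have habs : |d| = d := abs_of_pos hdpos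
      obtain ⟨w, hw1, hw0⟩ := root_gt_one_L1 k c (-d) (-d) c hc (by linarith)
      refine ⟨w, by rw [abs_of_pos (by linarith)]; exact hw1, ?_⟩
      linarith [hw0]
  · rcases hd0.lt_or_gt with hdneg | hdpos
    · have habs : |d| = -d := abs_of_neg hdneg
      rcases Nat.even_or_odd k with hk | hk
      · -- n odd : L1 with A=c,B=d,D=d,E=c, root at -w
        obtain ⟨w, hw1, hw0⟩ := root_gt_one_L1 k c d d c hc (by linarith)
        refine ⟨-w, by rw [abs_neg, abs_of_pos (by linarith)]; exact hw1, ?_⟩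
        rw [(hok3 hk).neg_pow, (hek2 hk).neg_pow]
        linarith [hw0]
      · -- n even : L2 with A=-c,B=-d,D=d,E=c, root at -w
        obtain ⟨w, hw1, hw0⟩ := root_gt_one_L2 k (-c) (-d) d c (by linarith)
          (by ring) (by rw [habs] at hd; ring_nf; ring_nf at hd; linarith)
        refine ⟨-w, by rw [abs_neg, abs_of_pos (by linarith)]; exact hw1, ?_⟩
        rw [(hek3 hk).neg_pow, (hok2 hk).neg_pow]
        linarith [hw0]
    · have habs : |d| = d := abs_of_pos hdpos
      obtain ⟨w, hw1, hw0⟩ := root_gt_one_L2 k (-c) d (-d) c (by linarith)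
        (by ring) (by rw [habs] at hd; ring_nf; ring_nf at hd; linarith)
      refine ⟨w, by rw [abs_of_pos (by linarith)]; exact hw1, ?_⟩
      linarith [hw0]

lemma off_root (k : ℕ) (σ c d : ℝ) (hσ : σ = 1 ∨ σ = -1) (hc : c ≠ 0)
    (hd : (k+3)*|c| < (k+1)*|d|) :
    ∃ w : ℝ, 1 < |w| ∧ σ*c*w^(k+3) - σ*d*w^(k+2) - d*w + c = 0 := by
  rcases hc.lt_or_gt with h | h
  · obtain ⟨w, hw1, hw0⟩ := off_root_pos k σ (-c) (-d) hσ (by linarith)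
      (by rw [abs_neg]; rwa [abs_of_neg h] at hd)
    exact ⟨w, hw1, by linarith [hw0]⟩
  · exact off_root_pos k σ c d hσ h (by rwa [abs_of_pos h] at hd)

lemma recip_root (k : ℕ) (σ c d w : ℝ) (hσ : σ = 1 ∨ σ = -1) (hw : w ≠ 0)
    (h : σ*c*w^(k+3) - σ*d*w^(k+2) - d*w + c = 0) :
    σ*c*(1/w)^(k+3) - σ*d*(1/w)^(k+2) - d*(1/w) + c = 0 := by
  have hσ2 : σ^2 = 1 := by rcases hσ with rfl | rfl <;> norm_num
  have h1 : (1/w)^(k+3)*w^(k+3) = 1 := by rw [← mul_pow]; simp [hw]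
  have h2 : (1/w)^(k+2)*w^(k+3) = w := by
    rw [pow_succ w (k+2), ← mul_assoc, ← mul_pow]; simp [hw]
  have h3 : (1/w)*w^(k+3) = w^(k+2) := by
    rw [pow_succ, ← mul_assoc, mul_comm (1/w) (w^(k+2)), mul_assoc]; simp [hw]
  have key : (σ*c*(1/w)^(k+3) - σ*d*(1/w)^(k+2) - d*(1/w) + c) * w^(k+3)
      = σ * (σ*c*w^(k+3) - σ*d*w^(k+2) - d*w + c) := by
    calc (σ*c*(1/w)^(k+3) - σ*d*(1/w)^(k+2) - d*(1/w) + c) * w^(k+3)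
        = σ*c*((1/w)^(k+3)*w^(k+3)) - σ*d*((1/w)^(k+2)*w^(k+3))
            - d*((1/w)*w^(k+3)) + c*w^(k+3) := by ring
      _ = σ*c*1 - σ*d*w - d*w^(k+2) + c*w^(k+3) := by rw [h1, h2, h3]
      _ = σ * (σ*c*w^(k+3) - σ*d*w^(k+2) - d*w + c) := by
          linear_combination (d * w^(k+2) - c * w^(k+3)) * hσ2
  have hwp : w^(k+3) ≠ 0 := pow_ne_zero _ hw
  have := key.trans (by rw [h, mul_zero])
  exact (mul_eq_zero.1 this).resolve_right hwp

lemma alt_prod_neg {u v s : ℝ} (h1 : s*u < 0) (h2 : (-s)*v < 0) : u*v < 0 := by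
  have h2' : 0 < s*v := by linarith
  have h3 : (s*u)*(s*v) < 0 := mul_neg_of_neg_of_pos h1 h2'
  have h4 : s^2*(u*v) < 0 := by nlinarith
  by_contra hcon
  push_neg at hcon
  exact absurd (mul_nonneg (sq_nonneg s) hcon) (not_le.2 h4)

lemma alt_sign {c d x e : ℝ} (he : e = 1 ∨ e = -1) (hcd : |c| < |d|) (hx : |x| ≤ 1) :
    (e*d)*(c*x - d*e) < 0 := by
  have h1 : |c*x| ≤ |c| := by
    rw [abs_mul]
    nlinarith [abs_nonneg c]
  have h1' : |c*x| < |d| := lt_of_le_of_lt h1 hcd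
  have hle := le_abs_self (c*x)
  have hge := neg_abs_le (c*x)
  rcases he with rfl | rfl
  · rcases lt_trichotomy d 0 with hd | hd | hd
    · rw [abs_of_neg hd] at h1'; nlinarith
    · simp [hd] at hcd; linarith [abs_nonneg c]
    · rw [abs_of_pos hd] at h1'; nlinarith
  · rcases lt_trichotomy d 0 with hd | hd | hd
    · rw [abs_of_neg hd] at h1'; nlinarith
    · simp [hd] at hcd; linarith [abs_nonneg c]
    · rw [abs_of_pos hd] at h1'; nlinarith

lemma neg_one_pow_or (i : ℕ) : ((-1:ℝ))^i = 1 ∨ ((-1:ℝ))^i = -1 := by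
  rcases Nat.even_or_odd i with h | h
  · exact Or.inl (h.neg_one_pow)
  · exact Or.inr (h.neg_one_pow)

open Real in
lemma cos_zeros (m : ℕ) (hm : 1 ≤ m) (c d : ℝ) (hcd : |c| < |d|) :
    ∃ T : Fin m → ℝ, StrictMono T ∧ ∀ i : Fin m,
      T i ∈ Set.Ico 0 π ∧ c * Real.cos (((m:ℝ)+2) * T i) - d * Real.cos ((m:ℝ) * T i) = 0 := by
  have hm0 : (0:ℝ) < m := by exact_mod_cast hm
  have hπ := Real.pi_pos
  set g : ℝ → ℝ := fun t => c * Real.cos (((m:ℝ)+2)*t) - d * Real.cos ((m:ℝ)*t) with hg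
  have hgc : Continuous g := by fun_prop
  set τ : ℕ → ℝ := fun i => i*π/m with hτ
  have hτmono : ∀ i j : ℕ, i ≤ j → τ i ≤ τ j := by
    intro i j hij
    simp only [hτ]
    have : (i:ℝ) ≤ (j:ℝ) := by exact_mod_cast hij
    gcongr
  have hτlt : ∀ i : ℕ, τ i < τ (i+1) := by
    intro i
    simp only [hτ]
    apply div_lt_div_of_pos_right ?_ hm0
    push_cast
    nlinarith
  have hsign : ∀ i : ℕ, (((-1:ℝ)^i) * d) * g (τ i) < 0 := by
    intro i
    have hx : (m:ℝ) * τ i = 0 + i*π := by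
      simp only [hτ]
      field_simp
      ring
    have hcosm : Real.cos ((m:ℝ) * τ i) = (-1)^i := by
      rw [hx, Real.cos_add_nat_mul_pi]
      simp
    have h := alt_sign (neg_one_pow_or i) hcd (Real.abs_cos_le_one (((m:ℝ)+2)*τ i))
    have hgi : g (τ i) = c * Real.cos (((m:ℝ)+2)*τ i) - d * ((-1:ℝ)^i) := by
      simp only [hg, hcosm]
    rw [hgi]
    exact h
  have hzero : ∀ i : Fin m, ∃ t, t ∈ Set.Ioo (τ i) (τ ((i:ℕ)+1)) ∧ g t = 0 := by
    intro i
    have hprod : g (τ i) * g (τ ((i:ℕ)+1)) < 0 := by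
      apply alt_prod_neg (hsign (i:ℕ))
      have h2 := hsign ((i:ℕ)+1)
      have he : ((-1:ℝ)^((i:ℕ)+1)) = -((-1:ℝ)^(i:ℕ)) := by rw [pow_succ]; ring
      rw [he] at h2
      simpa [neg_mul] using h2
    obtain ⟨t, ht, ht0⟩ := ivt_zero hgc (hτlt i) hprod
    exact ⟨t, ht, ht0⟩
  choose T hT1 hT2 using hzero
  refine ⟨T, ?_, ?_⟩
  · intro i j hij
    have h1 : T i < τ ((i:ℕ)+1) := (hT1 i).2
    have h2 : τ (j:ℕ) < T j := (hT1 j).1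
    have h3 : τ ((i:ℕ)+1) ≤ τ (j:ℕ) := hτmono _ _ (by exact hij)
    linarith
  · intro i
    refine ⟨⟨?_, ?_⟩, hT2 i⟩
    · have h0 : τ 0 = 0 := by simp [hτ]
      have := hτmono 0 (i:ℕ) (Nat.zero_le _)
      have h2 := (hT1 i).1
      linarith
    · have h1 : T i < τ ((i:ℕ)+1) := (hT1 i).2
      have h3 : τ ((i:ℕ)+1) ≤ τ m := hτmono _ _ (by omega)
      have hτm : τ m = π := by
        simp only [hτ]
        field_simp
      linarith

open Real in
lemma sin_zeros (m : ℕ) (hm : 1 ≤ m) (c d : ℝ) (hcd : |c| < |d|) :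
    ∃ T : Fin m → ℝ, StrictMono T ∧ ∀ i : Fin m,
      T i ∈ Set.Ico 0 π ∧ c * Real.sin (((m:ℝ)+2) * T i) - d * Real.sin ((m:ℝ) * T i) = 0 := by
  have hm0 : (0:ℝ) < m := by exact_mod_cast hm
  have hπ := Real.pi_pos
  set g : ℝ → ℝ := fun t => c * Real.sin (((m:ℝ)+2)*t) - d * Real.sin ((m:ℝ)*t) with hg
  have hgc : Continuous g := by fun_prop
  set b : ℕ → ℝ := fun j => (2*j+1)*π/(2*m) with hb
  have hbmono : ∀ i j : ℕ, i ≤ j → b i ≤ b j := by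
    intro i j hij
    simp only [hb]
    have : (i:ℝ) ≤ (j:ℝ) := by exact_mod_cast hij
    gcongr
  have hblt : ∀ i : ℕ, b i < b (i+1) := by
    intro i
    simp only [hb]
    apply div_lt_div_of_pos_right ?_ (by positivity)
    push_cast
    nlinarith
  have hbpos : ∀ i : ℕ, 0 < b i := by
    intro i
    simp only [hb]
    positivity
  have hblast : ∀ i : ℕ, i < m → b i < π := by
    intro i hi
    simp only [hb]
    rw [div_lt_iff₀ (by positivity)]
    have : (2*(i:ℝ)+1) < 2*(m:ℝ) := by
      have : (i:ℝ) + 1 ≤ (m:ℝ) := by exact_mod_cast hi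
      linarith
    nlinarith
  have hsign : ∀ j : ℕ, (((-1:ℝ)^j) * d) * g (b j) < 0 := by
    intro j
    have hx : (m:ℝ) * b j = π/2 + j*π := by
      simp only [hb]
      field_simp
      ring
    have hsinm : Real.sin ((m:ℝ) * b j) = (-1)^j := by
      rw [hx, Real.sin_add_nat_mul_pi]
      simp
    have h := alt_sign (neg_one_pow_or j) hcd (abs_sin_le_one (((m:ℝ)+2)*b j))
    have hgj : g (b j) = c * Real.sin (((m:ℝ)+2)*b j) - d * ((-1:ℝ)^j) := by
      simp only [hg, hsinm]
    rw [hgj]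
    exact h
  set A : ℕ → ℝ := fun i => if i = 0 then 0 else b (i-1) with hA
  have hzero : ∀ i : Fin m, ∃ t, t ∈ Set.Ico (A i) (b i) ∧ g t = 0 := by
    intro i
    rcases Nat.eq_zero_or_pos (i:ℕ) with h0 | hpos
    · refine ⟨0, ?_, ?_⟩
      · constructor
        · simp [hA, h0]
        · rw [h0]; exact hbpos 0
      · simp [hg]
    · have hi1 : (i:ℕ) - 1 + 1 = (i:ℕ) := by omega
      have hprod : g (b ((i:ℕ)-1)) * g (b ((i:ℕ)-1+1)) < 0 := by
        apply alt_prod_neg (hsign ((i:ℕ)-1))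
        have h2 := hsign ((i:ℕ)-1+1)
        have he : ((-1:ℝ)^(((i:ℕ)-1)+1)) = -((-1:ℝ)^((i:ℕ)-1)) := by rw [pow_succ]; ring
        rw [he] at h2
        simpa [neg_mul] using h2
      obtain ⟨t, ht, ht0⟩ := ivt_zero hgc (hblt ((i:ℕ)-1)) hprod
      rw [hi1] at ht
      refine ⟨t, ⟨?_, ht.2⟩, ht0⟩
      have hAi : A (i:ℕ) = b ((i:ℕ)-1) := by
        simp only [hA]
        rw [if_neg (by omega)]
      rw [hAi]
      exact le_of_lt ht.1
  choose T hT1 hT2 using hzero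
  have hAb : ∀ i : ℕ, 0 ≤ A i := by
    intro i
    simp only [hA]
    split
    · exact le_refl 0
    · exact (hbpos _).le
  refine ⟨T, ?_, ?_⟩
  · intro i j hij
    have h1 : T i < b (i:ℕ) := (hT1 i).2
    have h2 : A (j:ℕ) ≤ T j := (hT1 j).1
    have hj0 : (j:ℕ) ≠ 0 := by omega
    have hAj : A (j:ℕ) = b ((j:ℕ)-1) := by simp only [hA]; rw [if_neg hj0]
    have h3 : b (i:ℕ) ≤ b ((j:ℕ)-1) := hbmono _ _ (by omega)
    rw [hAj] at h2
    linarith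
  · intro i
    refine ⟨⟨?_, ?_⟩, hT2 i⟩
    · exact le_trans (hAb (i:ℕ)) (hT1 i).1
    · exact lt_trans (hT1 i).2 (hblast (i:ℕ) i.isLt)

lemma neg_one_pow_orC (i : ℕ) : ((-1:ℂ))^i = 1 ∨ ((-1:ℂ))^i = -1 := by
  rcases Nat.even_or_odd i with h | h
  · exact Or.inl (h.neg_one_pow)
  · exact Or.inr (h.neg_one_pow)

open Real in
lemma exp_two_inj {t t' : ℝ} (ht : t ∈ Set.Ico 0 π) (ht' : t' ∈ Set.Ico 0 π)
    (h : Complex.exp (2*(t:ℂ)*Complex.I) = Complex.exp (2*(t':ℂ)*Complex.I)) : t = t' := by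
  rw [Complex.exp_eq_exp_iff_exists_int] at h
  obtain ⟨j, hj⟩ := h
  have him := congrArg Complex.im hj
  simp [Complex.add_im, Complex.mul_im] at him
  -- him : 2*t = 2*t' + j*(2*π)  (in some form)
  have hj0 : j = 0 := by
    rcases lt_trichotomy j 0 with hc | hc | hc
    · have : (j:ℝ) ≤ -1 := by exact_mod_cast (show j ≤ -1 by omega)
      nlinarith [ht.1, ht.2, ht'.1, ht'.2, Real.pi_pos]
    · exact hc
    · have : (1:ℝ) ≤ (j:ℝ) := by exact_mod_cast hc
      nlinarith [ht.1, ht.2, ht'.1, ht'.2, Real.pi_pos]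
  rw [hj0] at him
  simp at him
  linarith [him]

lemma exp_add_inv (x : ℝ) :
    Complex.exp ((x:ℂ)*Complex.I) + (Complex.exp ((x:ℂ)*Complex.I))⁻¹
      = 2 * (Real.cos x : ℂ) := by
  rw [← Complex.exp_neg]
  have h1 : Complex.exp ((x:ℂ)*Complex.I) = Complex.cos x + Complex.sin x * Complex.I :=
    Complex.exp_mul_I ..
  have h2 : Complex.exp (-((x:ℂ)*Complex.I)) = Complex.cos x - Complex.sin x * Complex.I := by
    have : -((x:ℂ)*Complex.I) = ((-x:ℂ))*Complex.I := by ring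
    rw [this, Complex.exp_mul_I, Complex.cos_neg, Complex.sin_neg]
    ring
  rw [h1, h2, ← Complex.ofReal_cos]
  ring

lemma exp_sub_inv (x : ℝ) :
    Complex.exp ((x:ℂ)*Complex.I) - (Complex.exp ((x:ℂ)*Complex.I))⁻¹
      = 2 * (Real.sin x : ℂ) * Complex.I := by
  rw [← Complex.exp_neg]
  have h1 : Complex.exp ((x:ℂ)*Complex.I) = Complex.cos x + Complex.sin x * Complex.I :=
    Complex.exp_mul_I ..
  have h2 : Complex.exp (-((x:ℂ)*Complex.I)) = Complex.cos x - Complex.sin x * Complex.I := by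
    have : -((x:ℂ)*Complex.I) = ((-x:ℂ))*Complex.I := by ring
    rw [this, Complex.exp_mul_I, Complex.cos_neg, Complex.sin_neg]
    ring
  rw [h1, h2, ← Complex.ofReal_sin]
  ring

lemma eval_real_pt (k : ℕ) (c Δ : ℝ) (μ σ w : ℂ)
    (hsum : μ^2 + 1 = 2*(c:ℂ)*μ) (hμn : μ^(k+3) = σ) :
    (μ^2+1)*(μ*w)^(k+3) - 2*μ^2*(Δ:ℂ)*(μ*w)^(k+2) - 2*(Δ:ℂ)*(μ*w) + (μ^2+1)
      = 2*μ*(σ*(c:ℂ)*w^(k+3) - σ*(Δ:ℂ)*w^(k+2) - (Δ:ℂ)*w + (c:ℂ)) := by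
  have hp : μ^(k+4) = σ*μ := by
    rw [pow_succ, hμn]
  rw [mul_pow, mul_pow, hμn]
  linear_combination (σ*w^(k+3) + 1) * hsum + (-2*(Δ:ℂ)*w^(k+2)) * hp

lemma eval_circle_pt (k : ℕ) (c Δ : ℝ) (μ σ u : ℂ) (hu : u ≠ 0)
    (hsum : μ^2 + 1 = 2*(c:ℂ)*μ) (hμn : μ^(k+3) = σ)
    (hbr : σ*(c:ℂ)*u^(k+3) - σ*(Δ:ℂ)*u^(k+1) - (Δ:ℂ)*(u^(k+1))⁻¹ + (c:ℂ)*(u^(k+3))⁻¹ = 0) :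
    (μ^2+1)*(μ*u^2)^(k+3) - 2*μ^2*(Δ:ℂ)*(μ*u^2)^(k+2) - 2*(Δ:ℂ)*(μ*u^2) + (μ^2+1) = 0 := by
  have hp : μ^(k+4) = σ*μ := by rw [pow_succ, hμn]
  have hx1 : u^(k+3) * (u^(k+3))⁻¹ = 1 := mul_inv_cancel₀ (pow_ne_zero _ hu)
  have he1 : u^(k+3) = u^2 * u^(k+1) := by
    rw [← pow_add]
    congr 1
    omega
  have hx2 : u^(k+3) * (u^(k+1))⁻¹ = u^2 := by
    rw [he1, mul_assoc, mul_inv_cancel₀ (pow_ne_zero _ hu), mul_one]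
  have key : u^(k+3) * (σ*(c:ℂ)*u^(k+3) - σ*(Δ:ℂ)*u^(k+1) - (Δ:ℂ)*(u^(k+1))⁻¹ + (c:ℂ)*(u^(k+3))⁻¹)
      = σ*(c:ℂ)*(u^(k+3))^2 - σ*(Δ:ℂ)*u^(k+3)*u^(k+1) - (Δ:ℂ)*u^2 + (c:ℂ) := by
    linear_combination (-(Δ:ℂ)) * hx2 + (c:ℂ) * hx1
  have id1 : (μ^2+1)*(μ*u^2)^(k+3) - 2*μ^2*(Δ:ℂ)*(μ*u^2)^(k+2) - 2*(Δ:ℂ)*(μ*u^2) + (μ^2+1)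
      = 2*μ*(σ*(c:ℂ)*(u^(k+3))^2 - σ*(Δ:ℂ)*u^(k+3)*u^(k+1) - (Δ:ℂ)*u^2 + (c:ℂ)) := by
    rw [mul_pow, mul_pow, hμn]
    linear_combination (σ*(u^2)^(k+3) + 1) * hsum + (-2*(Δ:ℂ)*(u^2)^(k+2)) * hp
  rw [id1, ← key, hbr, mul_zero, mul_zero]

lemma pow_exp_eq (k' : ℕ) (t : ℝ) :
    (Complex.exp ((t:ℂ)*Complex.I))^k' = Complex.exp ((((k':ℝ)*t : ℝ) : ℂ)*Complex.I) := by
  rw [← Complex.exp_nat_mul]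
  congr 1
  push_cast
  ring

lemma bracket_even (k : ℕ) (c Δ t : ℝ)
    (h : c * Real.cos (((k:ℝ)+1+2)*t) - Δ * Real.cos (((k:ℝ)+1)*t) = 0) :
    (1:ℂ)*(c:ℂ)*(Complex.exp ((t:ℂ)*Complex.I))^(k+3)
      - (1:ℂ)*(Δ:ℂ)*(Complex.exp ((t:ℂ)*Complex.I))^(k+1)
      - (Δ:ℂ)*((Complex.exp ((t:ℂ)*Complex.I))^(k+1))⁻¹
      + (c:ℂ)*((Complex.exp ((t:ℂ)*Complex.I))^(k+3))⁻¹ = 0 := by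
  have hN := pow_exp_eq (k+3) t
  have hM := pow_exp_eq (k+1) t
  have hNt : ((k+3:ℕ):ℝ)*t = ((k:ℝ)+1+2)*t := by push_cast; ring
  have hMt : ((k+1:ℕ):ℝ)*t = ((k:ℝ)+1)*t := by push_cast; ring
  rw [hNt] at hN
  rw [hMt] at hM
  calc (1:ℂ)*(c:ℂ)*(Complex.exp ((t:ℂ)*Complex.I))^(k+3)
      - (1:ℂ)*(Δ:ℂ)*(Complex.exp ((t:ℂ)*Complex.I))^(k+1)
      - (Δ:ℂ)*((Complex.exp ((t:ℂ)*Complex.I))^(k+1))⁻¹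
      + (c:ℂ)*((Complex.exp ((t:ℂ)*Complex.I))^(k+3))⁻¹
      = (c:ℂ)*((Complex.exp ((t:ℂ)*Complex.I))^(k+3) + ((Complex.exp ((t:ℂ)*Complex.I))^(k+3))⁻¹)
        - (Δ:ℂ)*((Complex.exp ((t:ℂ)*Complex.I))^(k+1) + ((Complex.exp ((t:ℂ)*Complex.I))^(k+1))⁻¹) := by
        ring
    _ = (c:ℂ)*(2*(Real.cos (((k:ℝ)+1+2)*t) : ℂ)) - (Δ:ℂ)*(2*(Real.cos (((k:ℝ)+1)*t) : ℂ)) := by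
        rw [hN, hM, exp_add_inv, exp_add_inv]
    _ = 2*((c * Real.cos (((k:ℝ)+1+2)*t) - Δ * Real.cos (((k:ℝ)+1)*t) : ℝ) : ℂ) := by
        push_cast
        ring
    _ = 0 := by rw [h]; simp

lemma bracket_odd (k : ℕ) (c Δ t : ℝ)
    (h : c * Real.sin (((k:ℝ)+1+2)*t) - Δ * Real.sin (((k:ℝ)+1)*t) = 0) :
    (-1:ℂ)*(c:ℂ)*(Complex.exp ((t:ℂ)*Complex.I))^(k+3)
      - (-1:ℂ)*(Δ:ℂ)*(Complex.exp ((t:ℂ)*Complex.I))^(k+1)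
      - (Δ:ℂ)*((Complex.exp ((t:ℂ)*Complex.I))^(k+1))⁻¹
      + (c:ℂ)*((Complex.exp ((t:ℂ)*Complex.I))^(k+3))⁻¹ = 0 := by
  have hN := pow_exp_eq (k+3) t
  have hM := pow_exp_eq (k+1) t
  have hNt : ((k+3:ℕ):ℝ)*t = ((k:ℝ)+1+2)*t := by push_cast; ring
  have hMt : ((k+1:ℕ):ℝ)*t = ((k:ℝ)+1)*t := by push_cast; ring
  rw [hNt] at hN
  rw [hMt] at hM
  calc (-1:ℂ)*(c:ℂ)*(Complex.exp ((t:ℂ)*Complex.I))^(k+3)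
      - (-1:ℂ)*(Δ:ℂ)*(Complex.exp ((t:ℂ)*Complex.I))^(k+1)
      - (Δ:ℂ)*((Complex.exp ((t:ℂ)*Complex.I))^(k+1))⁻¹
      + (c:ℂ)*((Complex.exp ((t:ℂ)*Complex.I))^(k+3))⁻¹
      = -((c:ℂ)*((Complex.exp ((t:ℂ)*Complex.I))^(k+3) - ((Complex.exp ((t:ℂ)*Complex.I))^(k+3))⁻¹)
        - (Δ:ℂ)*((Complex.exp ((t:ℂ)*Complex.I))^(k+1) - ((Complex.exp ((t:ℂ)*Complex.I))^(k+1))⁻¹)) := by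
        ring
    _ = -((c:ℂ)*(2*(Real.sin (((k:ℝ)+1+2)*t) : ℂ)*Complex.I)
        - (Δ:ℂ)*(2*(Real.sin (((k:ℝ)+1)*t) : ℂ)*Complex.I)) := by
        rw [hN, hM, exp_sub_inv, exp_sub_inv]
    _ = -(2*Complex.I*((c * Real.sin (((k:ℝ)+1+2)*t) - Δ * Real.sin (((k:ℝ)+1)*t) : ℝ) : ℂ)) := by
        push_cast
        ring
    _ = 0 := by rw [h]; simp

lemma roots_eq_of (P : Polynomial ℂ) (hP : P ≠ 0) (M : Multiset ℂ)
    (hcard : M.card = P.natDegree) (hnodup : M.Nodup)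
    (hroots : ∀ z ∈ M, P.eval z = 0) : P.roots = M := by
  have hle : M ≤ P.roots := by
    rw [Multiset.le_iff_count]
    intro z
    by_cases hz : z ∈ M
    · rw [Polynomial.count_roots]
      have h1 : M.count z = 1 := Multiset.count_eq_one_of_mem hnodup hz
      rw [h1]
      exact (Polynomial.rootMultiplicity_pos hP).2 (hroots z hz)
    · simp [Multiset.count_eq_zero_of_notMem hz]
  have hcard2 : P.roots.card ≤ M.card := by
    rw [hcard]
    exact Polynomial.card_roots' P
  exact (Multiset.eq_of_le_of_card_le hle hcard2).symm


end BetheAux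

section Main
open Filter Set

/-- For `ωₐ = e^{2πia/n}` with `ωₐ ≠ −1`, `n ≥ 3`, and `Δ` real, if
`|Δ| > (n/(n−2))·|ωₐ + 1|/2` then `Pₐ(z) = (ωₐ+1)zⁿ − 2ωₐΔ z^{n−1} − 2Δ z + (ωₐ+1)`
has exactly `n − 2` roots on the complex unit circle, all of them simple, and the two
remaining roots are `s` and `ωₐ/s` for some `s` with `|s| ≠ 1`. -/
theorem bethe_polynomial_two_roots_off_circle
    (n : ℕ) (hn : 3 ≤ n) (a : ℕ) (ha : 1 ≤ a) (han : a ≤ n)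
    (Δ : ℝ)
    (hωa : Complex.exp (2 * Real.pi * Complex.I * a / n) ≠ -1)
    (hΔ : |Δ| > ((n : ℝ) / ((n : ℝ) - 2)) *
      ‖Complex.exp (2 * Real.pi * Complex.I * a / n) + 1‖ / 2) :
    letI ωa : ℂ := Complex.exp (2 * Real.pi * Complex.I * a / n)
    letI P : Polynomial ℂ :=
      Polynomial.C (ωa + 1) * Polynomial.X ^ n
        - Polynomial.C (2 * ωa * (Δ : ℂ)) * Polynomial.X ^ (n - 1)
        - Polynomial.C (2 * (Δ : ℂ)) * Polynomial.X
        + Polynomial.C (ωa + 1)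
    ({z : ℂ | P.eval z = 0 ∧ ‖z‖ = 1}.ncard = n - 2)
      ∧ (∀ z : ℂ, ‖z‖ = 1 → P.eval z = 0 → Polynomial.rootMultiplicity z P = 1)
      ∧ (∃ s : ℂ, ‖s‖ ≠ 1 ∧
          Multiset.filter (fun z : ℂ => ‖z‖ ≠ 1) P.roots = {s, ωa / s}) := by
  obtain ⟨k, rfl⟩ : ∃ k, n = k + 3 := ⟨n - 3, by omega⟩
  simp only [show k+3-1 = k+2 from rfl, show k+3-2 = k+1 from rfl]
  set ωa : ℂ := Complex.exp (2 * (Real.pi : ℂ) * Complex.I * (a : ℂ) / ((k+3 : ℕ) : ℂ)) with hωa_def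
  set P : Polynomial ℂ := Polynomial.C (ωa + 1) * Polynomial.X ^ (k+3)
        - Polynomial.C (2 * ωa * (Δ : ℂ)) * Polynomial.X ^ (k+2)
        - Polynomial.C (2 * (Δ : ℂ)) * Polynomial.X
        + Polynomial.C (ωa + 1) with hPdef
  set φ : ℝ := Real.pi * a / ((k+3 : ℕ) : ℝ) with hφ
  set μ : ℂ := Complex.exp ((φ:ℂ) * Complex.I) with hμdef
  set c : ℝ := Real.cos φ with hcdef
  have hμ0 : μ ≠ 0 := Complex.exp_ne_zero _
  have hnC : ((k+3:ℕ) : ℂ) ≠ 0 := Nat.cast_ne_zero.2 (by omega)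
  have h3k : ((k:ℂ)+3) ≠ 0 := by exact_mod_cast hnC
  have hμsq : μ^2 = ωa := by
    rw [hμdef, hωa_def, sq, ← Complex.exp_add]
    congr 1
    rw [hφ]
    push_cast
    field_simp
    ring
  set σ : ℂ := ((-1:ℂ))^a with hσdef
  set σr : ℝ := ((-1:ℝ))^a with hσrdef
  have hμn : μ^(k+3) = σ := by
    rw [hμdef, hσdef, ← Complex.exp_nat_mul, ← Complex.exp_pi_mul_I, ← Complex.exp_nat_mul]
    congr 1
    rw [hφ]
    push_cast
    field_simp
  have hσcast : ((σr : ℝ) : ℂ) = σ := by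
    rw [hσrdef, hσdef]
    push_cast
    ring
  have hμI : μ = Complex.cos (φ:ℂ) + Complex.sin (φ:ℂ) * Complex.I := Complex.exp_mul_I ..
  have hsum : μ^2 + 1 = 2*(c:ℂ)*μ := by
    rw [hμI, hcdef, ← Complex.ofReal_cos]
    have hpy : ((Real.sin φ : ℂ))^2 + ((Real.cos φ : ℂ))^2 = 1 := by
      have := Real.sin_sq_add_cos_sq φ
      exact_mod_cast congrArg (fun x : ℝ => (x:ℂ)) this
    rw [← Complex.ofReal_sin]
    linear_combination ((Real.sin φ : ℂ))^2 * Complex.I_sq - hpy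
  have hω1 : ωa + 1 = 2*(c:ℂ)*μ := by rw [← hμsq]; exact hsum
  have hω1ne : ωa + 1 ≠ 0 := fun h => hωa (eq_neg_of_add_eq_zero_left h)
  have hc0 : c ≠ 0 := by
    intro h
    apply hω1ne
    rw [hω1, h]
    simp
  have habs1 : ‖μ‖ = 1 := by
    rw [hμdef]
    simp [Complex.norm_exp]
  have habsω : ‖ωa + 1‖ = 2*|c| := by
    rw [hω1]
    simp [map_mul, habs1, Complex.norm_real]
  rw [habsω] at hΔ
  have hk1pos : (0:ℝ) < (k:ℝ)+1 := by positivity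
  have hk1ne : ((k:ℝ)+1) ≠ 0 := ne_of_gt hk1pos
  have hkey : ((k:ℝ)+3)*|c| < ((k:ℝ)+1)*|Δ| := by
    push_cast at hΔ
    rw [show ((k:ℝ)+3-2) = (k:ℝ)+1 from by ring] at hΔ
    have heq : ((k:ℝ)+3)/((k:ℝ)+1)*(2*|c|)/2 = (((k:ℝ)+3)*|c|)/((k:ℝ)+1) := by
      field_simp
    rw [heq] at hΔ
    rw [gt_iff_lt, div_lt_iff₀ hk1pos] at hΔ
    linarith
  have hcd : |c| < |Δ| := by nlinarith [abs_nonneg c, hkey, hk1pos]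
  -- degree facts
  have hdeg : P.natDegree = k+3 := by
    rw [hPdef]
    compute_degree
    · simp only [if_neg (show ¬ k+3 = 1 by omega)]
      simpa using hω1ne
    all_goals omega
  have hP0 : P ≠ 0 := by
    intro h
    rw [h] at hdeg
    simp at hdeg
  have hEval : ∀ z : ℂ, P.eval z
      = (μ^2+1)*z^(k+3) - 2*μ^2*(Δ:ℂ)*z^(k+2) - 2*(Δ:ℂ)*z + (μ^2+1) := by
    intro z
    rw [hPdef]
    simp only [Polynomial.eval_add, Polynomial.eval_sub, Polynomial.eval_mul,
      Polynomial.eval_pow, Polynomial.eval_C, Polynomial.eval_X, hμsq]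
  -- off-circle roots
  have hσr : σr = 1 ∨ σr = -1 := neg_one_pow_or a
  obtain ⟨w, hw1, hw0⟩ := off_root k σr c Δ hσr hc0 hkey
  have hwne : w ≠ 0 := by
    intro h
    rw [h] at hw1
    simp at hw1
    linarith
  have hwinv := recip_root k σr c Δ w hσr hwne hw0
  have hw0C : σ*(c:ℂ)*((w:ℝ):ℂ)^(k+3) - σ*(Δ:ℂ)*((w:ℝ):ℂ)^(k+2) - (Δ:ℂ)*((w:ℝ):ℂ) + (c:ℂ) = 0 := by
    rw [← hσcast]
    exact_mod_cast congrArg (fun x : ℝ => (x:ℂ)) hw0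
  have hwinvC : σ*(c:ℂ)*((1/w:ℝ):ℂ)^(k+3) - σ*(Δ:ℂ)*((1/w:ℝ):ℂ)^(k+2) - (Δ:ℂ)*((1/w:ℝ):ℂ) + (c:ℂ) = 0 := by
    rw [← hσcast]
    exact_mod_cast congrArg (fun x : ℝ => (x:ℂ)) hwinv
  set z₁ : ℂ := μ * ((w:ℝ):ℂ) with hz₁
  set z₂ : ℂ := μ * ((1/w:ℝ):ℂ) with hz₂
  have hz₁root : P.eval z₁ = 0 := by
    rw [hz₁, hEval, eval_real_pt k c Δ μ σ ((w:ℝ):ℂ) hsum hμn, hw0C, mul_zero]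
  have hz₂root : P.eval z₂ = 0 := by
    rw [hz₂, hEval, eval_real_pt k c Δ μ σ ((1/w:ℝ):ℂ) hsum hμn, hwinvC, mul_zero]
  have habsz₁ : ‖z₁‖ = |w| := by
    rw [hz₁]
    simp [map_mul, habs1, Complex.norm_real]
  have habsz₂ : ‖z₂‖ = |w|⁻¹ := by
    rw [hz₂]
    simp [map_mul, habs1, Complex.norm_real]
  have hz₂lt : ‖z₂‖ < 1 := by
    rw [habsz₂]
    exact inv_lt_one_of_one_lt₀ hw1
  -- circle roots
  have hcircle : ∃ T : Fin (k+1) → ℝ, StrictMono T ∧ ∀ i, T i ∈ Set.Ico 0 Real.pi ∧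
      P.eval (μ * Complex.exp (((T i : ℝ):ℂ)*Complex.I)^2) = 0 := by
    rcases Nat.even_or_odd a with hae | hao
    · have hσ1 : σ = 1 := hae.neg_one_pow
      obtain ⟨T, h1, h2⟩ := cos_zeros (k+1) (by omega) c Δ hcd
      refine ⟨T, h1, fun i => ⟨(h2 i).1, ?_⟩⟩
      have hcond : c * Real.cos (((k:ℝ)+1+2)*T i) - Δ * Real.cos (((k:ℝ)+1)*T i) = 0 := by
        have := (h2 i).2
        push_cast at this
        convert this using 3 <;> push_cast <;> ring
      have hbr := bracket_even k c Δ (T i) hcond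
      rw [hEval]
      refine eval_circle_pt k c Δ μ σ _ (Complex.exp_ne_zero _) hsum hμn ?_
      rw [hσ1]
      exact hbr
    · have hσ1 : σ = -1 := hao.neg_one_pow
      obtain ⟨T, h1, h2⟩ := sin_zeros (k+1) (by omega) c Δ hcd
      refine ⟨T, h1, fun i => ⟨(h2 i).1, ?_⟩⟩
      have hcond : c * Real.sin (((k:ℝ)+1+2)*T i) - Δ * Real.sin (((k:ℝ)+1)*T i) = 0 := by
        have := (h2 i).2
        push_cast at this
        convert this using 3 <;> push_cast <;> ring
      have hbr := bracket_odd k c Δ (T i) hcond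
      rw [hEval]
      refine eval_circle_pt k c Δ μ σ _ (Complex.exp_ne_zero _) hsum hμn ?_
      rw [hσ1]
      exact hbr
  obtain ⟨T, hTmono, hTprop⟩ := hcircle
  set e : Fin (k+1) → ℂ := fun i => μ * Complex.exp (((T i : ℝ):ℂ)*Complex.I)^2 with hedef
  have hsqexp : ∀ t : ℝ, Complex.exp (((t:ℝ):ℂ)*Complex.I)^2 = Complex.exp (2*((t:ℝ):ℂ)*Complex.I) := by
    intro t
    rw [sq, ← Complex.exp_add]
    congr 1
    ring
  have heabs : ∀ i, ‖e i‖ = 1 := by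
    intro i
    rw [hedef]
    simp [map_mul, map_pow, habs1, Complex.norm_exp]
  have heinj : Function.Injective e := by
    intro i j hij
    rw [hedef] at hij
    simp only at hij
    have h2 := mul_left_cancel₀ hμ0 hij
    rw [hsqexp, hsqexp] at h2
    exact hTmono.injective (exp_two_inj (hTprop i).1 (hTprop j).1 h2)
  set M : Multiset ℂ := z₁ ::ₘ z₂ ::ₘ (Multiset.map e Finset.univ.val) with hM
  have hz₁abs_ne : ‖z₁‖ ≠ 1 := by rw [habsz₁]; exact ne_of_gt hw1
  have hz₂abs_ne : ‖z₂‖ ≠ 1 := ne_of_lt hz₂lt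
  have hz₁_ne_z₂ : z₁ ≠ z₂ := by
    intro h
    have h2 : |w| = |w|⁻¹ := habsz₁.symm.trans (by rw [h, habsz₂])
    have h3 : |w|⁻¹ < 1 := inv_lt_one_of_one_lt₀ hw1
    linarith
  have hz₁_not_map : z₁ ∉ Multiset.map e Finset.univ.val := by
    intro h
    obtain ⟨i, _, hi⟩ := Multiset.mem_map.1 h
    rw [← hi] at hz₁abs_ne
    exact hz₁abs_ne (heabs i)
  have hz₂_not_map : z₂ ∉ Multiset.map e Finset.univ.val := by
    intro h
    obtain ⟨i, _, hi⟩ := Multiset.mem_map.1 h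
    rw [← hi] at hz₂abs_ne
    exact hz₂abs_ne (heabs i)
  have hmap_nodup : (Multiset.map e Finset.univ.val).Nodup :=
    Multiset.Nodup.map heinj Finset.univ.nodup
  have hnodup : M.Nodup := by
    rw [hM, Multiset.nodup_cons, Multiset.nodup_cons]
    refine ⟨?_, hz₂_not_map, hmap_nodup⟩
    rw [Multiset.mem_cons]
    rintro (h | h)
    · exact hz₁_ne_z₂ h
    · exact hz₁_not_map h
  have hcard : M.card = k+3 := by
    rw [hM]
    simp
  have hroots : ∀ z ∈ M, P.eval z = 0 := by
    intro z hz
    rw [hM, Multiset.mem_cons, Multiset.mem_cons] at hz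
    rcases hz with rfl | rfl | h
    · exact hz₁root
    · exact hz₂root
    · obtain ⟨i, _, hi⟩ := Multiset.mem_map.1 h
      rw [← hi]
      exact (hTprop i).2
  have hroots_eq : P.roots = M := roots_eq_of P hP0 M (by rw [hcard, hdeg]) hnodup hroots
  have hmemM : ∀ z : ℂ, P.eval z = 0 → z ∈ M := by
    intro z hz
    rw [← hroots_eq]
    exact (Polynomial.mem_roots hP0).2 hz
  refine ⟨?_, ?_, ?_⟩
  · have hset : {z : ℂ | P.eval z = 0 ∧ ‖z‖ = 1} = ↑(Finset.image e Finset.univ) := by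
      ext z
      simp only [Set.mem_setOf_eq, Finset.coe_image, Finset.coe_univ, Set.image_univ,
        Set.mem_range]
      constructor
      · rintro ⟨hz0, hz1⟩
        have hzM := hmemM z hz0
        rw [hM, Multiset.mem_cons, Multiset.mem_cons] at hzM
        rcases hzM with rfl | rfl | h
        · exact absurd hz1 hz₁abs_ne
        · exact absurd hz1 hz₂abs_ne
        · obtain ⟨i, _, hi⟩ := Multiset.mem_map.1 h
          exact ⟨i, hi⟩
      · rintro ⟨i, rfl⟩
        refine ⟨(hTprop i).2, heabs i⟩
    rw [hset, Set.ncard_coe_finset, Finset.card_image_of_injective _ heinj,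
      Finset.card_univ, Fintype.card_fin]
  · intro z hz1 hz0
    rw [← Polynomial.count_roots, hroots_eq]
    exact Multiset.count_eq_one_of_mem hnodup (hmemM z hz0)
  · refine ⟨z₁, hz₁abs_ne, ?_⟩
    have hwC : ((w:ℝ):ℂ) ≠ 0 := by exact_mod_cast hwne
    have hdiv : ωa / z₁ = z₂ := by
      rw [← hμsq, hz₁, hz₂]
      push_cast
      field_simp
    rw [hroots_eq, hM]
    rw [Multiset.filter_cons_of_pos (p := fun z => ‖z‖ ≠ 1) _ hz₁abs_ne,
      Multiset.filter_cons_of_pos (p := fun z => ‖z‖ ≠ 1) _ hz₂abs_ne]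
    rw [Multiset.filter_eq_nil.2 (by
      intro z hz
      obtain ⟨i, _, hi⟩ := Multiset.mem_map.1 hz
      rw [← hi]
      simp only [ne_eq, not_not]
      exact heabs i)]
    rw [hdiv]
    rfl

end Main
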